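/- Let G be a finite group, γ a gamma function on G, N = { γ(h)·ρ(h) : h ∈ G } the associated regular subgroup of Hol(G), and ∘ the associated operation. Define γ̃(x) = γ(x⁻¹)·ι(x⁻¹) for x ∈ G, where ι(g) is conjugation x ↦ g⁻¹xg. Then γ̃ is a gamma function on G, whose associated regular subgroup is the conjugate N^{inv} of N by the inversion permutation inv : x ↦ x⁻¹ of G; moreover, if ∘̃ is the operation associated to γ̃, then inv : (G,∘) → (G,∘̃) is a group isomorphism. -/

import Mathlib

/- Formalization of results from "Hopf-Galois structures on extensions of degree p²q and
skew braces of order p²q: the cyclic Sylow p-subgroup case" (Campedel, Caranti, Del Corso).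

Conventions: the paper composes permutations/automorphisms left-to-right and writes
`x^α` for the action; in Mathlib composition is right-to-left, so the paper's product
`αβ` is rendered as `β * α`, the paper's `x^α` as `α x`, and the paper's conjugate
`α^β = β⁻¹αβ` as `β * α * β⁻¹`. -/

namespace HGS

universe u v

variable {G : Type*} [Group G]

/-- The right regular representation `ρ`: `rhoPerm g` is the permutation `x ↦ x * g`. -/
def rhoPerm (g : G) : Equiv.Perm G := Equiv.mulRight g

/-- The image `ρ(G)` of the right regular representation, as a subgroup of `Equiv.Perm G`. -/
def rhoSubgroup (G : Type*) [Group G] : Subgroup (Equiv.Perm G) where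
  carrier := Set.range (rhoPerm (G := G))
  one_mem' := ⟨1, by ext x; simp [rhoPerm]⟩
  mul_mem' := by
    rintro _ _ ⟨g, rfl⟩ ⟨h, rfl⟩
    exact ⟨h * g, by ext x; simp [rhoPerm, Equiv.Perm.mul_apply, mul_assoc]⟩
  inv_mem' := by
    rintro _ ⟨g, rfl⟩
    exact ⟨g⁻¹, by ext x; simp [rhoPerm, Equiv.Perm.inv_def, Equiv.mulRight_symm]⟩

/-- The (permutational) holomorph of `G`: the normalizer in the symmetric group
`Perm G` of the image of the right regular representation. -/
def Hol (G : Type*) [Group G] : Subgroup (Equiv.Perm G) :=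
  Subgroup.normalizer ((rhoSubgroup G : Subgroup (Equiv.Perm G)) : Set (Equiv.Perm G))

/-- A subgroup `N ≤ Perm G` is regular if it acts simply transitively on the set `G`. -/
def IsRegularSubgroup (N : Subgroup (Equiv.Perm G)) : Prop :=
  ∀ x y : G, ∃! n : N, (n : Equiv.Perm G) x = y

/-- A gamma function (GF) on `G`: a map `γ : G → Aut G` satisfying the gamma functional
equation `γ(g^{γ(h)}·h) = γ(g)γ(h)` (the right-hand side is the paper's product, which in
Mathlib's composition order reads `γ h * γ g`). -/
def IsGammaFunction (γ : G → MulAut G) : Prop :=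
  ∀ g h : G, γ (γ h g * h) = γ h * γ g

/-- The circle operation `g ∘ h = g^{γ(h)} · h` associated to a gamma function. -/
def circ (γ : G → MulAut G) (g h : G) : G := γ h g * h

/-- `nu γ h` is the permutation `ν(h) = γ(h)ρ(h) : x ↦ (γ h x) * h`. -/
def nu (γ : G → MulAut G) (h : G) : Equiv.Perm G :=
  rhoPerm h * (γ h).toEquiv

/-- Proposition `prop:gammatilde` of the paper: duality.  Given a
gamma function `γ` with associated regular subgroup `N = {γ(h)ρ(h) : h ∈ G}` and circle
operation `∘`, the map `γ̃(x) = γ(x⁻¹)ι(x⁻¹)` (in Mathlib's order,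
`γ̃ x = MulAut.conj x * γ x⁻¹`, i.e. `y ↦ x · (γ x⁻¹ y) · x⁻¹`) is a gamma function; its
associated regular subgroup is the conjugate of `N` by the inversion permutation
(elementwise, `ν̃(y⁻¹) = inv ∘ ν(y) ∘ inv⁻¹`), and `inv : (G,∘) → (G,∘̃)` is an
isomorphism, i.e. `(x ∘ y)⁻¹ = x⁻¹ ∘̃ y⁻¹`. -/
theorem duality_gammatilde
    {G : Type u} [Group G] [Finite G] (γ : G → MulAut G) (hγ : IsGammaFunction γ)
    (γt : G → MulAut G) (hγt : ∀ x : G, γt x = MulAut.conj x * γ x⁻¹) :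
    IsGammaFunction γt ∧
    (∀ y : G, nu γt y⁻¹ = Equiv.inv G * nu γ y * (Equiv.inv G)⁻¹) ∧
    (∀ x y : G, (circ γ x y)⁻¹ = circ γt x⁻¹ y⁻¹) := by
  refine ⟨?_, ?_, ?_⟩
  · intro g h
    have key : γt h g * h = h * γ h⁻¹ g := by
      simp [hγt, mul_assoc]
    rw [key, hγt, hγt, hγt]
    have h1 : (h * γ h⁻¹ g)⁻¹ = γ h⁻¹ g⁻¹ * h⁻¹ := by
      rw [mul_inv_rev, map_inv]
    rw [h1, hγ g⁻¹ h⁻¹]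
    ext x
    simp [MulAut.conj, map_mul, map_inv, mul_assoc]
  · intro y
    ext x
    simp [nu, rhoPerm, hγt, Equiv.Perm.mul_apply, Equiv.Perm.inv_def, map_inv, mul_inv_rev, mul_assoc]
  · intro x y
    simp [circ, hγt, map_inv, mul_inv_rev, mul_assoc]
end HGS
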